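/- For every real v > 0, every A with 0 ≤ A ≤ v, and every θ ∈ [0,1), the inequality A + ∫_0^{v−A} (v − A − y)/(v + (θ − 1)y) dy ≥ λ(θ)·v holds, where λ(θ) = (θ² − θ + 1 − e^{θ−1})/(θ − 1)². (The left-hand side, as a function of A, attains its minimum at A = v(θ·e^{1−θ} − 1)/((θ − 1)e^{1−θ}).) -/

import Mathlib

open Real

lemma aux_key (t c : ℝ) (ht : 0 < t) :
    0 ≤ t * (Real.log t + c - 1) + Real.exp (-c) := by
  have h1 : 1 - (Real.log t + c) ≤ Real.exp (-(Real.log t + c)) := by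
    have := Real.add_one_le_exp (-(Real.log t + c)); linarith
  have h2 : Real.exp (-(Real.log t + c)) = Real.exp (-c) / t := by
    rw [neg_add, Real.exp_add, Real.exp_neg, Real.exp_log ht]; ring
  rw [h2] at h1
  have h3 : t * (1 - (Real.log t + c)) ≤ t * (Real.exp (-c) / t) :=
    mul_le_mul_of_nonneg_left h1 ht.le
  rw [mul_div_cancel₀ _ ht.ne'] at h3
  nlinarith

lemma aux_integral (v c B d : ℝ) (hv : 0 < v) (hc : 0 < c) (hB : 0 ≤ B)
    (hd : 0 < d) (hdef : d = v - c * B) :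
    ∫ y in (0:ℝ)..B, (B - y) / (v - c * y)
      = B / c + d / c ^ 2 * Real.log (d / v) := by
  have hden : ∀ y ∈ Set.uIcc (0:ℝ) B, 0 < v - c * y := by
    intro y hy
    rw [Set.uIcc_of_le hB] at hy
    nlinarith [hy.1, hy.2]
  have hderiv : ∀ y ∈ Set.uIcc (0:ℝ) B,
      HasDerivAt (fun y => y / c + d / c ^ 2 * Real.log (v - c * y))
        ((B - y) / (v - c * y)) y := by
    intro y hy
    have hne0 : v - c * y ≠ 0 := (hden y hy).ne'
    have h1 : HasDerivAt (fun y : ℝ => v - c * y) (-c) y := by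
      simpa using ((hasDerivAt_id y).const_mul c).const_sub v
    have h2 : HasDerivAt (fun y : ℝ => Real.log (v - c * y)) (-c / (v - c * y)) y :=
      h1.log hne0
    have h3 : HasDerivAt (fun y : ℝ => y / c + d / c ^ 2 * Real.log (v - c * y))
        (1 / c + d / c ^ 2 * (-c / (v - c * y))) y := by
      exact ((hasDerivAt_id y).div_const c).add (h2.const_mul _)
    convert h3 using 1
    have hc0 : c ≠ 0 := hc.ne'
    subst hdef
    obtain ⟨w, hw⟩ : ∃ w, w = v - c * y := ⟨_, rfl⟩
    have hw0 : w ≠ 0 := hw ▸ hne0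
    have hv' : v = w + c * y := by linarith
    rw [hv', show w + c * y - c * y = w by ring]
    field_simp
    ring
  have hInt : IntervalIntegrable (fun y => (B - y) / (v - c * y))
      MeasureTheory.volume 0 B := by
    apply ContinuousOn.intervalIntegrable
    apply ContinuousOn.div
    · fun_prop
    · fun_prop
    · intro y hy; exact (hden y hy).ne'
  rw [intervalIntegral.integral_eq_sub_of_hasDerivAt hderiv hInt]
  have hvB : v - c * B = d := by linarith
  rw [hvB]
  simp only [mul_zero, sub_zero, zero_div, zero_add]
  rw [Real.log_div hd.ne' hv.ne']
  ring

theorem stmt_11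
    (v A θ : ℝ) (hv : 0 < v) (hA0 : 0 ≤ A) (hAv : A ≤ v)
    (hθ0 : 0 ≤ θ) (hθ1 : θ < 1) :
    A + ∫ y in (0 : ℝ)..(v - A), (v - A - y) / (v + (θ - 1) * y)
      ≥ ((θ ^ 2 - θ + 1 - Real.exp (θ - 1)) / (θ - 1) ^ 2) * v := by
  have hc : 0 < 1 - θ := by linarith
  set c : ℝ := 1 - θ with hc_def
  set B : ℝ := v - A with hB_def
  have hB : 0 ≤ B := by simp only [hB_def]; linarith
  set d : ℝ := v - c * B with hd_def
  have hd0 : 0 ≤ d := by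
    have : d = θ * v + c * A := by rw [hd_def, hB_def, hc_def]; ring
    rw [this]
    positivity
  have hInteq : (∫ y in (0:ℝ)..B, (v - A - y) / (v + (θ - 1) * y))
      = ∫ y in (0:ℝ)..B, (B - y) / (v - c * y) := by
    apply intervalIntegral.integral_congr
    intro y _
    show (v - A - y) / (v + (θ - 1) * y) = (B - y) / (v - c * y)
    have h1 : v - A - y = B - y := by rw [hB_def]
    have h2 : v + (θ - 1) * y = v - c * y := by rw [hc_def]; ring
    rw [h1, h2]
  rcases eq_or_lt_of_le hd0 with hdeq | hdpos
  · -- degenerate case: d = 0 forces θ = 0 and A = 0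
    have hθ : θ = 0 := by
      have hdd : θ * v + c * A = 0 := by
        have : d = θ * v + c * A := by rw [hd_def, hB_def, hc_def]; ring
        linarith [this ▸ hdeq.symm]
      nlinarith [mul_nonneg hc.le hA0, mul_nonneg hθ0 hv.le]
    have hA : A = 0 := by
      have : d = θ * v + c * A := by rw [hd_def, hB_def, hc_def]; ring
      nlinarith [this ▸ hdeq.symm, mul_nonneg hθ0 hv.le]
    have hne : ∀ᵐ x : ℝ, x ≠ v := by
      rw [Filter.eventually_iff]
      apply MeasureTheory.mem_ae_iff.mpr
      simp [MeasureTheory.measure_singleton]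
    have hBv : B = v := by rw [hB_def, hA]; ring
    have hint : (∫ y in (0:ℝ)..B, (v - A - y) / (v + (θ - 1) * y)) = v := by
      have h1 : (∫ y in (0:ℝ)..B, (v - A - y) / (v + (θ - 1) * y))
          = ∫ y in (0:ℝ)..B, (1:ℝ) := by
        apply intervalIntegral.integral_congr_ae
        filter_upwards [hne] with x hx _
        show (v - A - x) / (v + (θ - 1) * x) = 1
        rw [hA, hθ]
        rw [show v + ((0:ℝ) - 1) * x = v - x from by ring,
            show v - (0:ℝ) - x = v - x from by ring]
        exact div_self (sub_ne_zero.mpr (Ne.symm hx))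
      rw [h1]; simp [hBv]
    rw [hint, hA, hθ]
    have he := Real.exp_pos ((0:ℝ) - 1)
    have hsimp : (((0:ℝ) ^ 2 - 0 + 1 - Real.exp (0 - 1)) / (0 - 1) ^ 2)
        = 1 - Real.exp ((0:ℝ) - 1) := by norm_num
    rw [hsimp]
    nlinarith
  · rw [hInteq, aux_integral v c B d hv hc hB hdpos hd_def]
    have ht : 0 < d / v := div_pos hdpos hv
    have key := aux_key (d / v) c ht
    rw [show -c = θ - 1 by rw [hc_def]; ring] at key
    have hv2 : 0 < v / c ^ 2 := div_pos hv (pow_pos hc 2)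
    have hid : A + (B / c + d / c ^ 2 * Real.log (d / v))
        - (θ ^ 2 - θ + 1 - Real.exp (θ - 1)) / (θ - 1) ^ 2 * v
        = (v / c ^ 2) * ((d / v) * (Real.log (d / v) + c - 1) + Real.exp (θ - 1)) := by
      have hdd : d = v - c * (v - A) := by rw [hd_def, hB_def]
      have hBB : B = v - A := hB_def
      have hcc : c = 1 - θ := hc_def
      rw [hdd, hBB, hcc]
      have h1 : (1:ℝ) - θ ≠ 0 := by linarith
      have h2 : (θ:ℝ) - 1 ≠ 0 := by intro h; apply h1; linarith
      field_simp
      ring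
    nlinarith [mul_nonneg hv2.le key]
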